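/- arXiv:1510.01307 — 3 statements merged into one kernel-verified Lean document; each statement's English description precedes it below -/
import Mathlib

section
/- Let a ∈ (0,1), let L : (0,∞) → (0,∞) be measurable with 0 < L(t) ≤ M for all t and L(t) ≥ c₀ > 0 for all t ≥ t₀. Set J(x,τ) = x² · [∫₀^∞ (tτ²)²(1+tτ²)^{-5/2} t^{-a-1} L(t) e^{-x²/(2(1+tτ²))} dt] / [∫₀^∞ (1+tτ²)^{-1/2} t^{-a-1} L(t) e^{-x²/(2(1+tτ²))} dt]. If a ∈ [1/2, 1), then for every x ∈ ℝ and every τ ∈ (0,1), J(x,τ) ≤ C · e^{x²/2} τ^{2a} where C > 0 is a constant depending only on L and a (one may take C = 2KM(1+o(1)) with K^{-1} = ∫₀^∞ t^{-a-1}L(t)dt and the o(1) term depending only on τ and tending to 0 as τ → 0). -/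
open MeasureTheory Real Set Filter Topology

set_option maxHeartbeats 2000000 in
/-- the bound J(x,τ) ≤ C · e^{x²/2} τ^{2a} for a ∈ [1/2,1). -/
theorem stmt_1 (a t₀ c₀ M : ℝ) (L : ℝ → ℝ)
    (ha : a ∈ Ico (1/2 : ℝ) 1)
    (hL : Measurable L) (hLpos : ∀ t ∈ Ioi (0:ℝ), 0 < L t)
    (hM : ∀ t ∈ Ioi (0:ℝ), L t ≤ M)
    (ht₀ : 0 < t₀) (hc₀ : 0 < c₀)
    (hlow : ∀ t, t₀ ≤ t → c₀ ≤ L t) :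
    ∃ C > 0, ∀ x : ℝ, ∀ τ ∈ Ioo (0:ℝ) 1,
      x ^ 2 *
        ((∫ t in Ioi (0:ℝ),
            (t * τ ^ 2) ^ 2 * (1 + t * τ ^ 2) ^ (-(5:ℝ)/2) * t ^ (-a - 1) * L t *
              Real.exp (-x ^ 2 / (2 * (1 + t * τ ^ 2)))) /
         (∫ t in Ioi (0:ℝ),
            (1 + t * τ ^ 2) ^ (-(1:ℝ)/2) * t ^ (-a - 1) * L t *
              Real.exp (-x ^ 2 / (2 * (1 + t * τ ^ 2)))))
      ≤ C * Real.exp (x ^ 2 / 2) * τ ^ (2 * a) := by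
  obtain ⟨ha1, ha2⟩ := ha
  have hM0 : 0 < M := lt_of_lt_of_le (hLpos 1 (by norm_num)) (hM 1 (by norm_num))
  set κ : ℝ := (2 + t₀) ^ (-(1:ℝ)/2) * (t₀ + 1) ^ (-a - 1) * c₀ with hκdef
  have hκ1 : (0:ℝ) < (2 + t₀) ^ (-(1:ℝ)/2) := Real.rpow_pos_of_pos (by linarith) _
  have hκ2 : (0:ℝ) < (t₀ + 1) ^ (-a - 1) := Real.rpow_pos_of_pos (by linarith) _
  have hκ : 0 < κ := by positivity
  refine ⟨2 * M / κ, by positivity, ?_⟩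
  rintro x τ ⟨hτ0, hτ1⟩
  have hτ2 : (0:ℝ) < τ ^ 2 := by positivity
  have hRHS : 0 ≤ 2 * M / κ * Real.exp (x ^ 2 / 2) * τ ^ (2 * a) := by positivity
  by_cases hx : x = 0
  · subst hx
    simpa using hRHS
  have hx2 : (0:ℝ) < x ^ 2 := by positivity
  set den_f : ℝ → ℝ := fun t =>
      (1 + t * τ ^ 2) ^ (-(1:ℝ)/2) * t ^ (-a - 1) * L t *
        Real.exp (-x ^ 2 / (2 * (1 + t * τ ^ 2))) with hdf
  set num_f : ℝ → ℝ := fun t =>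
      (t * τ ^ 2) ^ 2 * (1 + t * τ ^ 2) ^ (-(5:ℝ)/2) * t ^ (-a - 1) * L t *
        Real.exp (-x ^ 2 / (2 * (1 + t * τ ^ 2))) with hnf
  have hpos1 : ∀ t : ℝ, 0 ≤ t → (0:ℝ) < 1 + t * τ ^ 2 := by
    intro t ht; nlinarith
  by_cases hden : IntegrableOn den_f (Ioi 0) volume
  swap
  · rw [integral_undef hden]
    simpa using hRHS
  by_cases hnum : IntegrableOn num_f (Ioi 0) volume
  swap
  · rw [integral_undef hnum]
    simpa using hRHS
  -- the comparison function φ and its antiderivative G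
  set φ : ℝ → ℝ := fun t =>
      Real.exp (-x ^ 2 / (2 * (1 + t * τ ^ 2))) / (1 + t * τ ^ 2) ^ 2 with hφdef
  set G : ℝ → ℝ := fun t =>
      2 / (x ^ 2 * τ ^ 2) * Real.exp (-x ^ 2 / (2 * (1 + t * τ ^ 2))) with hGdef
  have hGd : ∀ t ∈ Ioi (0:ℝ), HasDerivAt G (φ t) t := by
    intro t ht
    have h0 : (0:ℝ) < 1 + t * τ ^ 2 := hpos1 t (le_of_lt ht)
    have h1 : HasDerivAt (fun t : ℝ => 2 * (1 + t * τ ^ 2)) (2 * τ ^ 2) t := by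
      simpa using (((hasDerivAt_mul_const (τ ^ 2)).const_add (1:ℝ)).const_mul (2:ℝ))
    have h2 : HasDerivAt (fun t : ℝ => -x ^ 2 / (2 * (1 + t * τ ^ 2)))
        ((0 * (2 * (1 + t * τ ^ 2)) - -x ^ 2 * (2 * τ ^ 2)) / (2 * (1 + t * τ ^ 2)) ^ 2) t :=
      (hasDerivAt_const t (-x ^ 2)).div h1 (by positivity)
    have h3 := (h2.exp).const_mul (2 / (x ^ 2 * τ ^ 2))
    have hval : φ t = 2 / (x ^ 2 * τ ^ 2) *
        (Real.exp (-x ^ 2 / (2 * (1 + t * τ ^ 2))) *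
          ((0 * (2 * (1 + t * τ ^ 2)) - -x ^ 2 * (2 * τ ^ 2)) / (2 * (1 + t * τ ^ 2)) ^ 2)) := by
      rw [hφdef]
      field_simp
      ring
    rw [hGdef, hval]
    exact h3
  have hφ0 : ∀ t ∈ Ioi (0:ℝ), 0 ≤ φ t := by
    intro t ht
    have h0 : (0:ℝ) < 1 + t * τ ^ 2 := hpos1 t (le_of_lt ht)
    rw [hφdef]
    positivity
  have hGc : ContinuousWithinAt G (Ici 0) 0 := by
    have hc : ContinuousOn G (Ici 0) := by
      apply ContinuousOn.mul continuousOn_const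
      apply Real.continuous_exp.comp_continuousOn
      apply ContinuousOn.div continuousOn_const
      · exact (Continuous.continuousOn (by continuity))
      · intro t ht
        have ht' : (0:ℝ) ≤ t := ht
        have := hpos1 t ht'
        positivity
    exact hc 0 self_mem_Ici
  have hGt : Tendsto G atTop (𝓝 (2 / (x ^ 2 * τ ^ 2))) := by
    have t1 : Tendsto (fun t : ℝ => 2 * (1 + t * τ ^ 2)) atTop atTop := by
      apply Tendsto.const_mul_atTop (by norm_num : (0:ℝ) < 2)
      apply tendsto_atTop_add_const_left
      exact Tendsto.atTop_mul_const hτ2 tendsto_id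
    have t2 : Tendsto (fun t : ℝ => -x ^ 2 / (2 * (1 + t * τ ^ 2))) atTop (𝓝 0) := by
      have := (t1.inv_tendsto_atTop).const_mul (-x ^ 2)
      simpa [div_eq_mul_inv, Function.comp] using this
    have t3 := (Real.continuous_exp.tendsto 0).comp t2
    have t4 := t3.const_mul (2 / (x ^ 2 * τ ^ 2))
    simpa [hGdef, Function.comp] using t4
  have hφint : IntegrableOn φ (Ioi 0) volume :=
    integrableOn_Ioi_deriv_of_nonneg hGc hGd hφ0 hGt
  have hφval : ∫ t in Ioi (0:ℝ), φ t = 2 / (x ^ 2 * τ ^ 2) - G 0 :=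
    integral_Ioi_of_hasDerivAt_of_nonneg hGc hGd hφ0 hGt
  have hφle : ∫ t in Ioi (0:ℝ), φ t ≤ 2 / (x ^ 2 * τ ^ 2) := by
    rw [hφval]
    have : 0 ≤ G 0 := by rw [hGdef]; positivity
    linarith
  -- pointwise bound for the numerator
  have hnum_pt : ∀ t ∈ Ioi (0:ℝ), num_f t ≤ M * (τ ^ 2) ^ (a + 1) * φ t := by
    intro t ht
    have ht' : (0:ℝ) < t := ht
    have hs : (0:ℝ) < t * τ ^ 2 := by positivity
    have h1s : (0:ℝ) < 1 + t * τ ^ 2 := hpos1 t ht'.le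
    have hLle : L t ≤ M := hM t ht
    have hL0 : 0 < L t := hLpos t ht
    have ht1 : t ^ (-a - 1) = (t * τ ^ 2) ^ (-a - 1) * (τ ^ 2) ^ (a + 1) := by
      have h2 : (τ ^ 2 : ℝ) ^ (-a - 1) * (τ ^ 2) ^ (a + 1) = 1 := by
        rw [← Real.rpow_add hτ2, show -a - 1 + (a + 1) = 0 by ring, Real.rpow_zero]
      calc t ^ (-a - 1) = t ^ (-a - 1) * ((τ ^ 2 : ℝ) ^ (-a - 1) * (τ ^ 2) ^ (a + 1)) := by
            rw [h2, mul_one]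
        _ = (t * τ ^ 2) ^ (-a - 1) * (τ ^ 2) ^ (a + 1) := by
            rw [Real.mul_rpow ht'.le hτ2.le]; ring
    have hpow2 : ((t * τ ^ 2 : ℝ)) ^ (2:ℕ) * (t * τ ^ 2) ^ (-a - 1) = (t * τ ^ 2) ^ (1 - a) := by
      rw [← Real.rpow_natCast (t * τ ^ 2) 2, ← Real.rpow_add hs,
        show ((2:ℕ):ℝ) + (-a - 1) = 1 - a by push_cast; ring]
    have hmono1 : (t * τ ^ 2) ^ (1 - a) ≤ (1 + t * τ ^ 2) ^ (1 - a) :=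
      Real.rpow_le_rpow hs.le (by linarith) (by linarith)
    have hmono2 : (1 + t * τ ^ 2) ^ (1 - a) * (1 + t * τ ^ 2) ^ (-(5:ℝ)/2)
        = (1 + t * τ ^ 2) ^ (1 - a + -(5:ℝ)/2) := (Real.rpow_add h1s _ _).symm
    have hmono3 : (1 + t * τ ^ 2) ^ (1 - a + -(5:ℝ)/2) ≤ (1 + t * τ ^ 2) ^ (-(2:ℝ)) :=
      Real.rpow_le_rpow_of_exponent_le (by linarith) (by linarith)
    have hfin : (1 + t * τ ^ 2) ^ (-(2:ℝ)) = (((1 + t * τ ^ 2)) ^ (2:ℕ))⁻¹ := by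
      rw [show (-(2:ℝ)) = -((2:ℕ):ℝ) by norm_num, Real.rpow_neg h1s.le, Real.rpow_natCast]
    have KEY : (t * τ ^ 2) ^ (2:ℕ) * (1 + t * τ ^ 2) ^ (-(5:ℝ)/2) * t ^ (-a - 1)
        ≤ (τ ^ 2) ^ (a + 1) * (((1 + t * τ ^ 2)) ^ (2:ℕ))⁻¹ := by
      calc (t * τ ^ 2) ^ (2:ℕ) * (1 + t * τ ^ 2) ^ (-(5:ℝ)/2) * t ^ (-a - 1)
          = ((t * τ ^ 2) ^ (2:ℕ) * (t * τ ^ 2) ^ (-a - 1)) * (1 + t * τ ^ 2) ^ (-(5:ℝ)/2)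
              * (τ ^ 2) ^ (a + 1) := by rw [ht1]; ring
        _ = (t * τ ^ 2) ^ (1 - a) * (1 + t * τ ^ 2) ^ (-(5:ℝ)/2) * (τ ^ 2) ^ (a + 1) := by
              rw [hpow2]
        _ ≤ (1 + t * τ ^ 2) ^ (1 - a) * (1 + t * τ ^ 2) ^ (-(5:ℝ)/2) * (τ ^ 2) ^ (a + 1) := by
              have h5 : (0:ℝ) ≤ (1 + t * τ ^ 2) ^ (-(5:ℝ)/2) := Real.rpow_nonneg h1s.le _
              have h6 : (0:ℝ) ≤ (τ ^ 2 : ℝ) ^ (a + 1) := Real.rpow_nonneg hτ2.le _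
              exact mul_le_mul_of_nonneg_right (mul_le_mul_of_nonneg_right hmono1 h5) h6
        _ = (1 + t * τ ^ 2) ^ (1 - a + -(5:ℝ)/2) * (τ ^ 2) ^ (a + 1) := by rw [hmono2]
        _ ≤ (1 + t * τ ^ 2) ^ (-(2:ℝ)) * (τ ^ 2) ^ (a + 1) :=
              mul_le_mul_of_nonneg_right hmono3 (Real.rpow_nonneg hτ2.le _)
        _ = (τ ^ 2) ^ (a + 1) * (((1 + t * τ ^ 2)) ^ (2:ℕ))⁻¹ := by rw [hfin]; ring
    have e1 : num_f t ≤ ((τ ^ 2) ^ (a + 1) * (((1 + t * τ ^ 2)) ^ (2:ℕ))⁻¹) * M *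
        Real.exp (-x ^ 2 / (2 * (1 + t * τ ^ 2))) := by
      rw [hnf]
      apply mul_le_mul_of_nonneg_right _ (Real.exp_nonneg _)
      exact mul_le_mul KEY hLle hL0.le (by positivity)
    calc num_f t ≤ _ := e1
      _ = M * (τ ^ 2) ^ (a + 1) * φ t := by rw [hφdef]; field_simp
  -- the numerator bound
  have hb_int : IntegrableOn (fun t => M * (τ ^ 2) ^ (a + 1) * φ t) (Ioi 0) volume :=
    hφint.const_mul _
  have hnum_le : (∫ t in Ioi (0:ℝ), num_f t) ≤ 2 * M * (τ ^ 2) ^ a / x ^ 2 := by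
    have step1 : (∫ t in Ioi (0:ℝ), num_f t)
        ≤ ∫ t in Ioi (0:ℝ), M * (τ ^ 2) ^ (a + 1) * φ t :=
      setIntegral_mono_on hnum hb_int measurableSet_Ioi hnum_pt
    have step2 : (∫ t in Ioi (0:ℝ), M * (τ ^ 2) ^ (a + 1) * φ t)
        = M * (τ ^ 2) ^ (a + 1) * ∫ t in Ioi (0:ℝ), φ t := integral_const_mul _ _
    have step3 : M * (τ ^ 2) ^ (a + 1) * (∫ t in Ioi (0:ℝ), φ t)
        ≤ M * (τ ^ 2) ^ (a + 1) * (2 / (x ^ 2 * τ ^ 2)) := by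
      apply mul_le_mul_of_nonneg_left hφle
      positivity
    have step4 : M * (τ ^ 2) ^ (a + 1) * (2 / (x ^ 2 * τ ^ 2))
        = 2 * M * (τ ^ 2) ^ a / x ^ 2 := by
      rw [show (τ ^ 2 : ℝ) ^ (a + 1) = (τ ^ 2) ^ a * τ ^ 2 by
        rw [Real.rpow_add hτ2, Real.rpow_one]]
      field_simp
    calc (∫ t in Ioi (0:ℝ), num_f t) ≤ _ := step1
      _ = _ := step2
      _ ≤ _ := step3
      _ = _ := step4
  -- the denominator lower bound
  have hsub : Ioc t₀ (t₀ + 1) ⊆ Ioi (0:ℝ) := fun t ht => ht₀.trans ht.1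
  have hden_pt : ∀ t ∈ Ioc t₀ (t₀ + 1), κ * Real.exp (-x ^ 2 / 2) ≤ den_f t := by
    intro t ht
    have ht0' : (0:ℝ) < t := ht₀.trans ht.1
    have hτle1 : τ ^ 2 ≤ 1 := by nlinarith
    have hττ : t * τ ^ 2 ≤ t := mul_le_of_le_one_right ht0'.le hτle1
    have hub : 1 + t * τ ^ 2 ≤ 2 + t₀ := by
      have := ht.2; linarith
    have h1s : (0:ℝ) < 1 + t * τ ^ 2 := hpos1 t ht0'.le
    have f1 : (2 + t₀) ^ (-(1:ℝ)/2) ≤ (1 + t * τ ^ 2) ^ (-(1:ℝ)/2) :=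
      Real.rpow_le_rpow_of_nonpos h1s hub (by norm_num)
    have f2 : (t₀ + 1) ^ (-a - 1) ≤ t ^ (-a - 1) :=
      Real.rpow_le_rpow_of_nonpos ht0' (by linarith [ht.2]) (by linarith)
    have f3 : c₀ ≤ L t := hlow t ht.1.le
    have f4 : Real.exp (-x ^ 2 / 2) ≤ Real.exp (-x ^ 2 / (2 * (1 + t * τ ^ 2))) := by
      apply Real.exp_le_exp.2
      rw [neg_div, neg_div, neg_le_neg_iff]
      apply div_le_div_of_nonneg_left (by positivity) (by norm_num) (by nlinarith)
    have hLt0 : 0 < L t := hLpos t (hsub ht)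
    calc κ * Real.exp (-x ^ 2 / 2)
        = (2 + t₀) ^ (-(1:ℝ)/2) * (t₀ + 1) ^ (-a - 1) * c₀ * Real.exp (-x ^ 2 / 2) := by
          rw [hκdef]
      _ ≤ (1 + t * τ ^ 2) ^ (-(1:ℝ)/2) * t ^ (-a - 1) * L t *
            Real.exp (-x ^ 2 / (2 * (1 + t * τ ^ 2))) := by
          apply mul_le_mul _ f4 (Real.exp_nonneg _)
          · have := Real.rpow_nonneg h1s.le (-(1:ℝ)/2)
            have := Real.rpow_nonneg ht0'.le (-a - 1)
            positivity
          · apply mul_le_mul _ f3 hc₀.le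
            · have := Real.rpow_nonneg h1s.le (-(1:ℝ)/2)
              have := Real.rpow_nonneg ht0'.le (-a - 1)
              positivity
            · exact mul_le_mul f1 f2 hκ2.le (Real.rpow_nonneg h1s.le _)
      _ = den_f t := by rw [hdf]
  have hden_ae : 0 ≤ᵐ[volume.restrict (Ioi (0:ℝ))] den_f := by
    rw [EventuallyLE, ae_restrict_iff' measurableSet_Ioi]
    apply ae_of_all
    intro t ht
    have ht' : (0:ℝ) < t := ht
    have h1s : (0:ℝ) < 1 + t * τ ^ 2 := hpos1 t ht'.le
    have hLt0 : 0 < L t := hLpos t ht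
    rw [hdf]
    have := Real.rpow_nonneg h1s.le (-(1:ℝ)/2)
    have := Real.rpow_nonneg ht'.le (-a - 1)
    positivity
  have hvol : (volume (Ioc t₀ (t₀ + 1))).toReal = 1 := by
    rw [Real.volume_Ioc, show t₀ + 1 - t₀ = (1:ℝ) by ring, ENNReal.ofReal_one, ENNReal.toReal_one]
  have hconst_int : IntegrableOn (fun _ : ℝ => κ * Real.exp (-x ^ 2 / 2))
      (Ioc t₀ (t₀ + 1)) volume := by
    apply integrableOn_const measure_Ioc_lt_top.ne
  have hge1 : κ * Real.exp (-x ^ 2 / 2) ≤ ∫ t in Ioc t₀ (t₀ + 1), den_f t := by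
    have h := setIntegral_mono_on hconst_int (hden.mono_set hsub) measurableSet_Ioc hden_pt
    rwa [setIntegral_const, measureReal_def, hvol, one_smul] at h
  have hge2 : (∫ t in Ioc t₀ (t₀ + 1), den_f t) ≤ ∫ t in Ioi (0:ℝ), den_f t :=
    setIntegral_mono_set hden hden_ae (HasSubset.Subset.eventuallyLE hsub)
  have hden_lb : κ * Real.exp (-x ^ 2 / 2) ≤ ∫ t in Ioi (0:ℝ), den_f t := hge1.trans hge2
  have hden_pos : 0 < ∫ t in Ioi (0:ℝ), den_f t :=
    lt_of_lt_of_le (by positivity) hden_lb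
  -- put everything together
  have key : (∫ t in Ioi (0:ℝ), num_f t) / (∫ t in Ioi (0:ℝ), den_f t)
      ≤ (2 * M * (τ ^ 2) ^ a / x ^ 2) / (κ * Real.exp (-x ^ 2 / 2)) := by
    apply div_le_div₀ (by positivity) hnum_le (by positivity) hden_lb
  have hfinal : x ^ 2 * ((2 * M * (τ ^ 2) ^ a / x ^ 2) / (κ * Real.exp (-x ^ 2 / 2)))
      = 2 * M / κ * Real.exp (x ^ 2 / 2) * τ ^ (2 * a) := by
    have hττ : ((τ ^ 2 : ℝ)) ^ a = τ ^ (2 * a) := by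
      rw [← Real.rpow_natCast τ 2, ← Real.rpow_mul hτ0.le]
      norm_num
    rw [show -x ^ 2 / 2 = -(x ^ 2 / 2) by ring, Real.exp_neg, ← hττ]
    have he : Real.exp (x ^ 2 / 2) ≠ 0 := (Real.exp_pos _).ne'
    field_simp
  calc x ^ 2 * ((∫ t in Ioi (0:ℝ), num_f t) / (∫ t in Ioi (0:ℝ), den_f t))
      ≤ x ^ 2 * ((2 * M * (τ ^ 2) ^ a / x ^ 2) / (κ * Real.exp (-x ^ 2 / 2))) :=
        mul_le_mul_of_nonneg_left key (sq_nonneg x)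
    _ = 2 * M / κ * Real.exp (x ^ 2 / 2) * τ ^ (2 * a) := hfinal
end

section
/- Lower bound I_{5/2}: let L : (0,∞) → (0,∞) be nondecreasing and bounded by M, let a = 1/2, fix y > 0 and τ ∈ (0, 1/√2). Then I_{5/2} := ∫₀^∞ (tτ²)²(1+tτ²)^{-5/2} t^{-3/2} L(t) e^{tτ²y/(1+tτ²)} dt ≥ L(1)·τ·[ (τ/y)(e^{y/2} - e^{τ²y}) + (1/(√2 y))(e^{y} - e^{y/2}) ]. -/
open MeasureTheory Real Set

lemma aux_sq_le (a b : ℝ) (hb : 0 ≤ b) (h : a^2 ≤ b^2) : a ≤ b := by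
  nlinarith [sq_nonneg (a - b), sq_nonneg (a + b)]

lemma aux_id (c t : ℝ) (hc : 0 < c) (ht : 0 < t) :
    (t*c)^2 * (1+t*c)^(-(5:ℝ)/2) * t^(-(3:ℝ)/2)
      = (c^2 * Real.sqrt t) / (Real.sqrt (1+t*c) * (1+t*c)^2) := by
  have hs : 0 < 1 + t*c := by positivity
  rw [Real.sqrt_eq_rpow, Real.sqrt_eq_rpow, eq_div_iff (by positivity)]
  rw [mul_pow, ← Real.rpow_natCast t 2, ← Real.rpow_natCast (1+t*c) 2]
  rw [show (((2:ℕ):ℝ)) = (2:ℝ) by norm_num]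
  have e1 : t ^ (2:ℝ) * t ^ (-(3:ℝ)/2) = t ^ ((1:ℝ)/2) := by
    rw [← Real.rpow_add ht]; norm_num
  have e2 : (1+t*c) ^ (-(5:ℝ)/2) * ((1+t*c) ^ ((1:ℝ)/2) * (1+t*c) ^ (2:ℝ)) = 1 := by
    rw [← Real.rpow_add hs, ← Real.rpow_add hs]; norm_num
  calc t ^ (2:ℝ) * c^2 * (1+t*c)^(-(5:ℝ)/2) * t^(-(3:ℝ)/2) * ((1+t*c)^((1:ℝ)/2) * (1+t*c)^(2:ℝ))
      = c^2 * (t ^ (2:ℝ) * t ^ (-(3:ℝ)/2)) *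
          ((1+t*c)^(-(5:ℝ)/2) * ((1+t*c)^((1:ℝ)/2) * (1+t*c)^(2:ℝ))) := by ring
    _ = c^2 * t ^ ((1:ℝ)/2) * 1 := by rw [e1, e2]
    _ = c^2 * t ^ ((1:ℝ)/2) := by ring

lemma aux_key (c t K : ℝ) (hc : 0 < c) (ht : 0 < t)
    (h : K * Real.sqrt (1+t*c) ≤ c^2 * Real.sqrt t) :
    K / (1+t*c)^2 ≤ (t*c)^2 * (1+t*c)^(-(5:ℝ)/2) * t^(-(3:ℝ)/2) := by
  have hs : 0 < 1 + t*c := by positivity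
  rw [aux_id c t hc ht, div_le_div_iff₀ (by positivity) (by positivity)]
  calc K * (Real.sqrt (1+t*c) * (1+t*c)^2) = (K * Real.sqrt (1+t*c)) * (1+t*c)^2 := by ring
    _ ≤ (c^2 * Real.sqrt t) * (1+t*c)^2 := by
        exact mul_le_mul_of_nonneg_right h (by positivity)

set_option maxHeartbeats 1000000 in
/-- lower bound on I_{5/2} (Lemma A.5, a = 1/2). -/
theorem stmt_6 (y τ M : ℝ) (L : ℝ → ℝ)
    (hLmono : Monotone L) (hLpos : ∀ t ∈ Ioi (0:ℝ), 0 < L t)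
    (hM : ∀ t ∈ Ioi (0:ℝ), L t ≤ M)
    (hy : 0 < y) (hτ : τ ∈ Ioo (0:ℝ) (1 / Real.sqrt 2)) :
    (∫ t in Ioi (0:ℝ),
        (t * τ ^ 2) ^ 2 * (1 + t * τ ^ 2) ^ (-(5:ℝ)/2) * t ^ (-(3:ℝ)/2) * L t *
          Real.exp (t * τ ^ 2 * y / (1 + t * τ ^ 2)))
    ≥ L 1 * τ *
        ((τ / y) * (Real.exp (y / 2) - Real.exp (τ ^ 2 * y)) +
          (1 / (Real.sqrt 2 * y)) * (Real.exp y - Real.exp (y / 2))) := by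
  obtain ⟨hτ0, hτs⟩ := hτ
  have hs2 : (0:ℝ) < Real.sqrt 2 := by positivity
  have h2sq : Real.sqrt 2 ^ 2 = 2 := Real.sq_sqrt (by norm_num)
  have hc0 : 0 < τ ^ 2 := by positivity
  have hc2 : τ ^ 2 < 1/2 := by
    have h1 : τ * Real.sqrt 2 < 1 := by
      have := (lt_div_iff₀ hs2).mp hτs; linarith
    nlinarith
  set c := τ ^ 2 with hc
  have hc1 : c < 1 := by linarith
  have h1c : 0 < 1 - c := by linarith
  set t₁ : ℝ := (1-c)⁻¹ with ht₁def
  set t₂ : ℝ := c⁻¹ with ht₂def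
  have ht₁0 : 0 < t₁ := by positivity
  have hmul : (1-c) * t₁ = 1 := by rw [ht₁def]; field_simp
  have hmul2 : c * t₂ = 1 := by rw [ht₂def]; field_simp
  have ht₁1 : 1 ≤ t₁ := by nlinarith [hc0, (by positivity : (0:ℝ) < (1-c)⁻¹)]
  have ht₁₂ : t₁ < t₂ := by
    rw [ht₁def, ht₂def]
    exact inv_strictAnti₀ hc0 (by linarith)
  have ht₂0 : 0 < t₂ := by positivity
  have hM0 : 0 < M := lt_of_lt_of_le (hLpos 1 (by norm_num)) (hM 1 (by norm_num))
  have hL1 : 0 < L 1 := hLpos 1 (by norm_num)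
  -- the integrand and the comparison function
  set f : ℝ → ℝ := fun t => (t * c) ^ 2 * (1 + t * c) ^ (-(5:ℝ)/2) * t ^ (-(3:ℝ)/2) * L t *
          Real.exp (t * c * y / (1 + t * c)) with hf
  set φ : ℝ → ℝ := fun t => Real.exp (t * c * y / (1 + t * c)) * (c * y / (1 + t * c) ^ 2)
    with hφ
  have hsne : ∀ t : ℝ, 0 ≤ t → (0:ℝ) < 1 + t * c := fun t ht => by positivity
  -- derivative
  have hder : ∀ t : ℝ, 0 ≤ t →
      HasDerivAt (fun t => Real.exp (t * c * y / (1 + t * c))) (φ t) t := by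
    intro t ht
    have hs := hsne t ht
    have hne : (1 + t * c) ≠ 0 := ne_of_gt hs
    have hnum : HasDerivAt (fun t : ℝ => t * c * y) (c * y) t := by
      simpa using ((hasDerivAt_id t).mul_const c).mul_const y
    have hden : HasDerivAt (fun t : ℝ => 1 + t * c) c t := by
      simpa using ((hasDerivAt_id t).mul_const c).const_add 1
    have h' := (hnum.div hden hne).exp
    convert h' using 1
    · rfl
    simp only [Pi.div_apply]
    rw [hφ]
    field_simp
    ring
  have hφ0 : ∀ t : ℝ, 0 ≤ t → 0 ≤ φ t := fun t ht => by
    have := hsne t ht; rw [hφ]; positivity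
  have htend : Filter.Tendsto (fun t => Real.exp (t * c * y / (1 + t * c)))
      Filter.atTop (nhds (Real.exp y)) := by
    have h1 : Filter.Tendsto (fun t : ℝ => c * y / (t⁻¹ + c)) Filter.atTop
        (nhds (c * y / (0 + c))) := by
      refine Filter.Tendsto.div tendsto_const_nhds
        (Filter.Tendsto.add tendsto_inv_atTop_zero tendsto_const_nhds) (by simpa using hc0.ne')
    have h0 : c * y / (0 + c) = y := by field_simp; ring
    rw [h0] at h1
    have hg : Filter.Tendsto (fun t : ℝ => t * c * y / (1 + t * c)) Filter.atTop (nhds y) := by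
      refine Filter.Tendsto.congr' ?_ h1
      filter_upwards [Filter.eventually_gt_atTop 0] with t ht
      have h2 : (1 + t * c) ≠ 0 := ne_of_gt (hsne t ht.le)
      have h3 : t⁻¹ + c ≠ 0 := by positivity
      field_simp
    have := (Real.continuous_exp.tendsto y).comp hg
    exact this
  have hgt₂ : t₂ * c * y / (1 + t₂ * c) = y / 2 := by
    rw [ht₂def]; field_simp; norm_num
  have hgt₁ : t₁ * c * y / (1 + t₁ * c) = c * y := by
    rw [ht₁def]; field_simp; ring
  have hB : ∫ t in Ioi t₂, φ t = Real.exp y - Real.exp (y/2) := by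
    rw [integral_Ioi_of_hasDerivAt_of_nonneg' (fun x hx => hder x (le_trans ht₂0.le hx))
      (fun x hx => hφ0 x (le_trans ht₂0.le (le_of_lt hx))) htend, hgt₂]
  have hφintB : IntegrableOn φ (Ioi t₂) :=
    integrableOn_Ioi_deriv_of_nonneg' (fun x hx => hder x (le_trans ht₂0.le hx))
      (fun x hx => hφ0 x (le_trans ht₂0.le (le_of_lt hx))) htend
  have hφcont : ContinuousOn φ (uIcc t₁ t₂) := by
    rw [uIcc_of_le ht₁₂.le]
    intro x hx
    have hx0 : 0 < x := lt_of_lt_of_le ht₁0 hx.1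
    have hne : (1 + x * c) ≠ 0 := ne_of_gt (hsne x hx0.le)
    apply ContinuousAt.continuousWithinAt
    rw [hφ]
    have hd : ContinuousAt (fun t : ℝ => 1 + t * c) x := by fun_prop
    exact (Real.continuous_exp.continuousAt.comp
      (((continuousAt_id.mul continuousAt_const).mul continuousAt_const).div hd hne)).mul
      (continuousAt_const.div (hd.pow 2) (pow_ne_zero 2 hne))
  have hφiA : IntervalIntegrable φ volume t₁ t₂ := hφcont.intervalIntegrable
  have hφintA : IntegrableOn φ (Ioc t₁ t₂) :=
    (intervalIntegrable_iff_integrableOn_Ioc_of_le ht₁₂.le).mp hφiA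
  have hA : ∫ t in Ioc t₁ t₂, φ t = Real.exp (y/2) - Real.exp (c*y) := by
    rw [← intervalIntegral.integral_of_le ht₁₂.le,
      intervalIntegral.integral_eq_sub_of_hasDerivAt
        (fun x hx => hder x (by
          rw [uIcc_of_le ht₁₂.le] at hx; exact le_trans ht₁0.le hx.1)) hφiA,
      hgt₂, hgt₁]
  -- nonnegativity and integrability of f
  have hf0 : ∀ t ∈ Ioi (0:ℝ), 0 ≤ f t := by
    intro t ht
    have h1 := hLpos t ht
    have h2 := hsne t (le_of_lt ht)
    rw [hf]
    have ht' : (0:ℝ) < t := ht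
    positivity
  have hfm : Measurable f := by
    have hLm : Measurable L := hLmono.measurable
    rw [hf]
    fun_prop
  have hint1 : IntegrableOn f (Ioc 0 1) := by
    refine Integrable.mono' (g := fun _ => c ^ 2 * M * Real.exp y)
      (integrableOn_const measure_Ioc_lt_top.ne)
      hfm.aestronglyMeasurable.restrict ?_
    rw [ae_restrict_iff' measurableSet_Ioc]
    refine Filter.Eventually.of_forall fun t ht => ?_
    obtain ⟨ht0, ht1⟩ := ht
    have hs := hsne t ht0.le
    rw [Real.norm_eq_abs, abs_of_nonneg (hf0 t ht0)]
    have hLt := hLpos t ht0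
    have hexple : Real.exp (t * c * y / (1 + t * c)) ≤ Real.exp y := by
      apply Real.exp_le_exp.2
      rw [div_le_iff₀ hs]
      nlinarith [mul_pos ht0 hc0]
    have hhead : (t * c) ^ 2 * (1 + t * c) ^ (-(5:ℝ)/2) * t ^ (-(3:ℝ)/2) ≤ c ^ 2 := by
      rw [aux_id c t hc0 ht0]
      have h1 : Real.sqrt t ≤ 1 := by
        rw [show (1:ℝ) = Real.sqrt 1 by simp]
        exact Real.sqrt_le_sqrt ht1
      have h2 : (1:ℝ) ≤ Real.sqrt (1 + t * c) * (1 + t * c) ^ 2 := by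
        have h3 : (1:ℝ) ≤ 1 + t * c := by nlinarith [mul_pos ht0 hc0]
        have h4 : (1:ℝ) ≤ Real.sqrt (1 + t * c) := Real.one_le_sqrt.mpr h3
        nlinarith
      have h5 : c ^ 2 * Real.sqrt t ≤ c ^ 2 := by nlinarith [Real.sqrt_nonneg t]
      exact le_trans (div_le_self (by positivity) h2) h5
    rw [hf]
    calc (t * c) ^ 2 * (1 + t * c) ^ (-(5:ℝ)/2) * t ^ (-(3:ℝ)/2) * L t *
          Real.exp (t * c * y / (1 + t * c))
        ≤ (c ^ 2 * M) * Real.exp y := by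
          apply mul_le_mul _ hexple (Real.exp_pos _).le (by positivity)
          exact mul_le_mul hhead (hM t ht0) hLt.le (by positivity)
      _ = c ^ 2 * M * Real.exp y := by ring
  have hint2 : IntegrableOn f (Ioi 1) := by
    refine Integrable.mono' (g := fun t => (c ^ (-(1:ℝ)/2) * M * Real.exp y) * t ^ (-(2:ℝ)))
      (((integrableOn_Ioi_rpow_of_lt (by norm_num) one_pos)).const_mul _)
      hfm.aestronglyMeasurable.restrict ?_
    rw [ae_restrict_iff' measurableSet_Ioi]
    refine Filter.Eventually.of_forall fun t ht => ?_
    have ht0 : (0:ℝ) < t := lt_trans one_pos ht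
    have hs := hsne t ht0.le
    have hp : 0 < t * c := by positivity
    rw [Real.norm_eq_abs, abs_of_nonneg (hf0 t ht0)]
    have hLt := hLpos t ht0
    have hexple : Real.exp (t * c * y / (1 + t * c)) ≤ Real.exp y := by
      apply Real.exp_le_exp.2
      rw [div_le_iff₀ hs]
      nlinarith [hp]
    have hmid : (1 + t * c) ^ (-(5:ℝ)/2) ≤ (t * c) ^ (-(5:ℝ)/2) :=
      Real.rpow_le_rpow_of_nonpos hp (by linarith) (by norm_num)
    have heq : (t * c) ^ 2 * (t * c) ^ (-(5:ℝ)/2) * t ^ (-(3:ℝ)/2)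
        = c ^ (-(1:ℝ)/2) * t ^ (-(2:ℝ)) := by
      calc (t * c) ^ 2 * (t * c) ^ (-(5:ℝ)/2) * t ^ (-(3:ℝ)/2)
          = (t * c) ^ ((2:ℝ) + -(5:ℝ)/2) * t ^ (-(3:ℝ)/2) := by
            rw [Real.rpow_add hp, Real.rpow_two]
        _ = (t * c) ^ (-(1:ℝ)/2) * t ^ (-(3:ℝ)/2) := by norm_num
        _ = t ^ (-(1:ℝ)/2) * c ^ (-(1:ℝ)/2) * t ^ (-(3:ℝ)/2) := by
            rw [Real.mul_rpow ht0.le hc0.le]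
        _ = c ^ (-(1:ℝ)/2) * (t ^ (-(1:ℝ)/2) * t ^ (-(3:ℝ)/2)) := by ring
        _ = c ^ (-(1:ℝ)/2) * t ^ (-(2:ℝ)) := by rw [← Real.rpow_add ht0]; norm_num
    rw [hf]
    calc (t * c) ^ 2 * (1 + t * c) ^ (-(5:ℝ)/2) * t ^ (-(3:ℝ)/2) * L t *
          Real.exp (t * c * y / (1 + t * c))
        ≤ (t * c) ^ 2 * (t * c) ^ (-(5:ℝ)/2) * t ^ (-(3:ℝ)/2) * M * Real.exp y := by
          apply mul_le_mul _ hexple (Real.exp_pos _).le (by positivity)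
          apply mul_le_mul _ (hM t ht0) hLt.le (by positivity)
          apply mul_le_mul_of_nonneg_right _ (by positivity)
          exact mul_le_mul_of_nonneg_left hmid (by positivity)
      _ = (c ^ (-(1:ℝ)/2) * M * Real.exp y) * t ^ (-(2:ℝ)) := by rw [heq]; ring
  have hint : IntegrableOn f (Ioi 0) := by
    rw [show Ioi (0:ℝ) = Ioc 0 1 ∪ Ioi 1 from (Ioc_union_Ioi_eq_Ioi zero_le_one).symm]
    exact hint1.union hint2
  -- pointwise bounds
  have hptA : ∀ x ∈ Ioc t₁ t₂, (L 1 * c / y) * φ x ≤ f x := by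
    intro x hx
    obtain ⟨hx1, hx2⟩ := hx
    have hx0 : 0 < x := lt_of_lt_of_le ht₁0 hx1.le
    have hsx := hsne x hx0.le
    have hle : 1 + x * c ≤ x := by nlinarith [mul_le_mul_of_nonneg_left hx1.le h1c.le]
    have hkey := aux_key c x (c ^ 2) hc0 hx0
      (mul_le_mul_of_nonneg_left (Real.sqrt_le_sqrt hle) (by positivity))
    have hLx : L 1 ≤ L x := hLmono (le_trans ht₁1 hx1.le)
    have hL1' := hL1
    calc L 1 * c / y * φ x
        = (c ^ 2 / (1 + x * c) ^ 2) * (L 1 * Real.exp (x * c * y / (1 + x * c))) := by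
          rw [hφ]; field_simp
      _ ≤ ((x * c) ^ 2 * (1 + x * c) ^ (-(5:ℝ)/2) * x ^ (-(3:ℝ)/2)) *
            (L x * Real.exp (x * c * y / (1 + x * c))) := by
          apply mul_le_mul hkey (mul_le_mul_of_nonneg_right hLx (Real.exp_pos _).le)
            (by positivity) (by positivity)
      _ = f x := by rw [hf]; ring
  have ht₂1 : 1 ≤ t₂ := le_trans ht₁1 ht₁₂.le
  have hptB : ∀ x ∈ Ioi t₂, (L 1 * τ / (Real.sqrt 2 * y)) * φ x ≤ f x := by
    intro x hx
    have hx1 : t₂ ≤ x := le_of_lt hx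
    have hx0 : 0 < x := lt_of_lt_of_le ht₂0 hx1
    have hsx := hsne x hx0.le
    have hxc : 1 ≤ x * c := by nlinarith [mul_le_mul_of_nonneg_left hx1 hc0.le]
    have hkey := aux_key c x (τ * c / Real.sqrt 2) hc0 hx0 (by
      apply aux_sq_le _ _ (by positivity)
      have h1 : Real.sqrt (1 + x * c) ^ 2 = 1 + x * c := Real.sq_sqrt hsx.le
      have h2 : Real.sqrt x ^ 2 = x := Real.sq_sqrt hx0.le
      rw [mul_pow, mul_pow, div_pow, h1, h2, h2sq, hc]
      have hτ6 : (0:ℝ) ≤ τ ^ 6 := by positivity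
      nlinarith [mul_le_mul_of_nonneg_left (show 1 + x * c ≤ 2 * (x * c) by linarith)
        hτ6, hc0])
    have hLx : L 1 ≤ L x := hLmono (le_trans ht₂1 hx1)
    calc L 1 * τ / (Real.sqrt 2 * y) * φ x
        = ((τ * c / Real.sqrt 2) / (1 + x * c) ^ 2) *
            (L 1 * Real.exp (x * c * y / (1 + x * c))) := by
          rw [hφ]; field_simp
      _ ≤ ((x * c) ^ 2 * (1 + x * c) ^ (-(5:ℝ)/2) * x ^ (-(3:ℝ)/2)) *
            (L x * Real.exp (x * c * y / (1 + x * c))) := by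
          apply mul_le_mul hkey (mul_le_mul_of_nonneg_right hLx (Real.exp_pos _).le)
            (by positivity) (by positivity)
      _ = f x := by rw [hf]; ring
  calc (∫ t in Ioi (0:ℝ), f t)
      ≥ ∫ t in Ioi t₁, f t := by
        apply setIntegral_mono_set hint
          ((ae_restrict_iff' measurableSet_Ioi).2 (Filter.Eventually.of_forall hf0))
          (HasSubset.Subset.eventuallyLE (Ioi_subset_Ioi ht₁0.le))
    _ = (∫ t in Ioc t₁ t₂, f t) + ∫ t in Ioi t₂, f t := by
        rw [← Ioc_union_Ioi_eq_Ioi ht₁₂.le]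
        rw [setIntegral_union (Ioc_disjoint_Ioi le_rfl) measurableSet_Ioi
          (hint.mono_set (fun x hx => lt_of_lt_of_le ht₁0 (le_of_lt hx.1)))
          (hint.mono_set (fun x hx => lt_trans ht₂0 hx))]
    _ ≥ (∫ t in Ioc t₁ t₂, (L 1 * c / y) * φ t) +
          ∫ t in Ioi t₂, (L 1 * τ / (Real.sqrt 2 * y)) * φ t := by
        apply add_le_add
        · exact setIntegral_mono_on (hφintA.const_mul _)
            (hint.mono_set (fun x hx => lt_of_lt_of_le ht₁0 (le_of_lt hx.1)))
            measurableSet_Ioc hptA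
        · exact setIntegral_mono_on (hφintB.const_mul _)
            (hint.mono_set (fun x hx => lt_trans ht₂0 hx))
            measurableSet_Ioi hptB
    _ = (L 1 * c / y) * (Real.exp (y/2) - Real.exp (c*y)) +
          (L 1 * τ / (Real.sqrt 2 * y)) * (Real.exp y - Real.exp (y/2)) := by
        rw [integral_const_mul, integral_const_mul, hA, hB]
    _ = L 1 * τ * ((τ / y) * (Real.exp (y / 2) - Real.exp (c * y)) +
          (1 / (Real.sqrt 2 * y)) * (Real.exp y - Real.exp (y / 2))) := by
        rw [hc]; field_simp
end

section
/- Tail robustness: fix τ ∈ (0,1), a ∈ (0,1), and L : (0,∞) → (0,∞) measurable with c₀ ≤ L ≤ M on [t₀,∞) and L ≤ M everywhere. Let T_τ(x) = x(1 - E(κ|x,τ)) be the posterior mean with E(κ|x,τ) = ∫₀¹ κ^{a+1/2}(1-κ)^{-a-1} L((1/τ²)(1/κ - 1)) e^{-κx²/2} dκ / ∫₀¹ κ^{a-1/2}(1-κ)^{-a-1} L((1/τ²)(1/κ - 1)) e^{-κx²/2} dκ. Then lim_{|x| → ∞} |T_τ(x) - x| = 0. -/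
open MeasureTheory Real Set Filter

set_option maxHeartbeats 1600000

/-- tail robustness: |T_τ(x) - x| = |x · E(κ|x,τ)| → 0 as |x| → ∞,
for each fixed τ ∈ (0,1). -/
theorem stmt_11 (τ a t₀ c₀ M : ℝ) (L : ℝ → ℝ)
    (hτ : τ ∈ Ioo (0:ℝ) 1) (ha : a ∈ Ioo (0:ℝ) 1)
    (hL : Measurable L) (hLpos : ∀ t ∈ Ioi (0:ℝ), 0 < L t)
    (hM : ∀ t ∈ Ioi (0:ℝ), L t ≤ M)
    (ht₀ : 0 < t₀) (hc₀ : 0 < c₀) (hlow : ∀ t, t₀ ≤ t → c₀ ≤ L t) :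
    Tendsto (fun x : ℝ =>
        |x * ((∫ k in Ioo (0:ℝ) 1,
                k ^ (a + 1/2) * (1 - k) ^ (-a - 1) *
                  L ((1 / τ ^ 2) * (1 / k - 1)) * Real.exp (-k * x ^ 2 / 2)) /
              (∫ k in Ioo (0:ℝ) 1,
                k ^ (a - 1/2) * (1 - k) ^ (-a - 1) *
                  L ((1 / τ ^ 2) * (1 / k - 1)) * Real.exp (-k * x ^ 2 / 2)))|)
      (cocompact ℝ) (nhds 0) := by
  obtain ⟨hτ0, hτ1⟩ := hτ
  obtain ⟨ha0, ha1⟩ := ha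
  -- basic positivity of the argument of L on (0,1)
  have hargpos : ∀ k : ℝ, k ∈ Ioo (0:ℝ) 1 → 0 < (1 / τ ^ 2) * (1 / k - 1) := by
    intro k hk
    have h1 : 1 < 1 / k := by
      rw [lt_div_iff₀ hk.1]; linarith [hk.2]
    have : 0 < 1 / τ ^ 2 := by positivity
    nlinarith
  -- pointwise positivity of the weight g
  have hgpos : ∀ k : ℝ, k ∈ Ioo (0:ℝ) 1 →
      0 < k ^ (a - 1/2) * (1 - k) ^ (-a - 1) * L ((1 / τ ^ 2) * (1 / k - 1)) := by
    intro k hk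
    have h1k : (0:ℝ) < 1 - k := by linarith [hk.2]
    exact mul_pos (mul_pos (Real.rpow_pos_of_pos hk.1 _) (Real.rpow_pos_of_pos h1k _))
      (hLpos _ (hargpos k hk))
  have hgNpos : ∀ k : ℝ, k ∈ Ioo (0:ℝ) 1 →
      0 < k ^ (a + 1/2) * (1 - k) ^ (-a - 1) * L ((1 / τ ^ 2) * (1 / k - 1)) := by
    intro k hk
    have h1k : (0:ℝ) < 1 - k := by linarith [hk.2]
    exact mul_pos (mul_pos (Real.rpow_pos_of_pos hk.1 _) (Real.rpow_pos_of_pos h1k _))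
      (hLpos _ (hargpos k hk))
  -- measurability of the weights
  have hmD : Measurable (fun k : ℝ =>
      k ^ (a - 1/2) * (1 - k) ^ (-a - 1) * L ((1 / τ ^ 2) * (1 / k - 1))) := by
    apply Measurable.mul
    apply Measurable.mul
    · fun_prop
    · fun_prop
    · exact hL.comp (by fun_prop)
  have hmN : Measurable (fun k : ℝ =>
      k ^ (a + 1/2) * (1 - k) ^ (-a - 1) * L ((1 / τ ^ 2) * (1 / k - 1))) := by
    apply Measurable.mul
    apply Measurable.mul
    · fun_prop
    · fun_prop
    · exact hL.comp (by fun_prop)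
  by_cases hg : IntegrableOn (fun k : ℝ =>
      k ^ (a - 1/2) * (1 - k) ^ (-a - 1) * L ((1 / τ ^ 2) * (1 / k - 1))) (Ioo 0 1) volume
  swap
  · -- the denominator is (Lean-)zero for every x, so the whole function is 0
    have hzero : ∀ x : ℝ,
        (∫ k in Ioo (0:ℝ) 1, k ^ (a - 1/2) * (1 - k) ^ (-a - 1) *
          L ((1 / τ ^ 2) * (1 / k - 1)) * Real.exp (-k * x ^ 2 / 2)) = 0 := by
      intro x
      apply integral_undef
      intro hcon
      apply hg
      have h2 := hcon.const_mul (Real.exp (x ^ 2 / 2))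
      apply h2.mono' (hmD.aestronglyMeasurable.restrict)
      rw [ae_restrict_iff' measurableSet_Ioo]
      refine ae_of_all _ fun k hk => ?_
      have hgk := (hgpos k hk).le
      have h1 : Real.exp (x ^ 2 / 2) * Real.exp (-k * x ^ 2 / 2) = Real.exp ((1 - k) * x ^ 2 / 2) := by
        rw [← Real.exp_add]; ring_nf
      have h2' : (1:ℝ) ≤ Real.exp ((1 - k) * x ^ 2 / 2) := by
        apply Real.one_le_exp
        have : (0:ℝ) ≤ 1 - k := by linarith [hk.2]
        positivity
      rw [Real.norm_eq_abs, abs_of_nonneg hgk]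
      calc k ^ (a - 1/2) * (1 - k) ^ (-a - 1) * L ((1 / τ ^ 2) * (1 / k - 1))
          = (k ^ (a - 1/2) * (1 - k) ^ (-a - 1) * L ((1 / τ ^ 2) * (1 / k - 1))) * 1 := by ring
        _ ≤ (k ^ (a - 1/2) * (1 - k) ^ (-a - 1) * L ((1 / τ ^ 2) * (1 / k - 1))) *
              Real.exp ((1 - k) * x ^ 2 / 2) := by
            exact mul_le_mul_of_nonneg_left h2' hgk
        _ = Real.exp (x ^ 2 / 2) * (k ^ (a - 1/2) * (1 - k) ^ (-a - 1) *
              L ((1 / τ ^ 2) * (1 / k - 1)) * Real.exp (-k * x ^ 2 / 2)) := by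
            rw [← h1]; ring
    have heq : (fun x : ℝ =>
        |x * ((∫ k in Ioo (0:ℝ) 1,
                k ^ (a + 1/2) * (1 - k) ^ (-a - 1) *
                  L ((1 / τ ^ 2) * (1 / k - 1)) * Real.exp (-k * x ^ 2 / 2)) /
              (∫ k in Ioo (0:ℝ) 1,
                k ^ (a - 1/2) * (1 - k) ^ (-a - 1) *
                  L ((1 / τ ^ 2) * (1 / k - 1)) * Real.exp (-k * x ^ 2 / 2)))|) = fun _ => (0:ℝ) := by
      funext x
      rw [hzero x, div_zero, mul_zero, abs_zero]
    rw [heq]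
    exact tendsto_const_nhds
  -- Main (integrable) case.
  obtain ⟨k₀, hk₀_def⟩ : ∃ v : ℝ, v = (1 + τ ^ 2 * t₀)⁻¹ := ⟨_, rfl⟩
  have hpos1 : (0:ℝ) < 1 + τ ^ 2 * t₀ := by positivity
  have hk₀0 : 0 < k₀ := by rw [hk₀_def]; positivity
  have hk₀1 : k₀ < 1 := by
    rw [hk₀_def]
    rw [inv_lt_one_iff₀]
    right
    nlinarith [mul_pos (pow_pos hτ0 2) ht₀]
  have hC0 : 0 < (1 - k₀) ^ (-a - 1) := Real.rpow_pos_of_pos (by linarith) _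
  have hM0 : 0 < M := lt_of_lt_of_le hc₀ ((hlow t₀ le_rfl).trans (hM t₀ ht₀))
  have hΓ0 : 0 < Real.Gamma (a + 1/2) := Real.Gamma_pos_of_pos (by linarith)
  obtain ⟨G, hG_def⟩ : ∃ v : ℝ, v = ∫ k in Ioo (0:ℝ) 1,
      k ^ (a - 1/2) * (1 - k) ^ (-a - 1) * L ((1 / τ ^ 2) * (1 / k - 1)) := ⟨_, rfl⟩
  have hG0 : 0 ≤ G := by
    rw [hG_def]
    exact setIntegral_nonneg measurableSet_Ioo fun k hk => (hgpos k hk).le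
  obtain ⟨K1, hK1_def⟩ : ∃ v : ℝ, v =
      4 * Real.exp (-1) * ((1 - k₀) ^ (-a - 1)) * M * Real.Gamma (a + 1/2) * 2 ^ (a + 1/2)
        * (a + 1/2) / (c₀ * Real.exp (-1)) := ⟨_, rfl⟩
  obtain ⟨K2, hK2_def⟩ : ∃ v : ℝ, v = G * (a + 1/2) / (c₀ * Real.exp (-1)) := ⟨_, rfl⟩
  -- the bounding function
  have hBtend : Tendsto (fun x : ℝ =>
      K1 / |x| + K2 * (x ^ 2) ^ (a + 1/2 + 1) * Real.exp (-(k₀/2) * x ^ 2))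
      (cocompact ℝ) (nhds 0) := by
    have habs : Tendsto (fun x : ℝ => |x|) (cocompact ℝ) atTop := by
      exact (tendsto_norm_cocompact_atTop (E := ℝ)).congr fun x => Real.norm_eq_abs x
    have t1 : Tendsto (fun x : ℝ => K1 / |x|) (cocompact ℝ) (nhds 0) :=
      Tendsto.div_atTop tendsto_const_nhds habs
    have hsq : Tendsto (fun x : ℝ => x ^ 2) (cocompact ℝ) atTop := by
      have h := (tendsto_pow_atTop (n := 2) two_ne_zero).comp habs
      refine h.congr fun x => ?_
      simp [sq_abs]
    have hφ : Tendsto (fun u : ℝ => u ^ (a + 1/2 + 1) * Real.exp (-(k₀/2) * u)) atTop (nhds 0) :=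
      tendsto_rpow_mul_exp_neg_mul_atTop_nhds_zero _ _ (by positivity)
    have t2 : Tendsto (fun x : ℝ => K2 * (x ^ 2) ^ (a + 1/2 + 1) * Real.exp (-(k₀/2) * x ^ 2))
        (cocompact ℝ) (nhds 0) := by
      have := ((hφ.comp hsq).const_mul K2)
      simpa [mul_assoc, Function.comp] using this
    simpa using t1.add t2
  apply squeeze_zero' (Eventually.of_forall fun x => abs_nonneg _) _ hBtend
  -- eventual bound
  have hev : ∀ᶠ x : ℝ in cocompact ℝ, max 2 (Real.sqrt (2 / k₀)) ≤ |x| := by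
    have habs : Tendsto (fun x : ℝ => |x|) (cocompact ℝ) atTop := by
      exact (tendsto_norm_cocompact_atTop (E := ℝ)).congr fun x => Real.norm_eq_abs x
    exact habs.eventually_ge_atTop _
  filter_upwards [hev] with x hx
  -- setup per-x quantities
  have hy2 : (2:ℝ) ≤ |x| := le_trans (le_max_left _ _) hx
  have hy0 : (0:ℝ) < |x| := by linarith
  have hy1 : (1:ℝ) ≤ |x| := by linarith
  have hx2pos : (0:ℝ) < x ^ 2 := by nlinarith [sq_abs x]
  obtain ⟨s, hs_def⟩ : ∃ v : ℝ, v = x ^ 2 / 2 := ⟨_, rfl⟩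
  have hs0 : 0 < s := by rw [hs_def]; positivity
  have hs_y : s = |x| ^ 2 / 2 := by rw [hs_def, sq_abs]
  have hx2k : 2 / k₀ ≤ x ^ 2 := by
    have h1 : Real.sqrt (2 / k₀) ≤ |x| := le_trans (le_max_right _ _) hx
    have h2 : Real.sqrt (2 / k₀) ^ 2 = 2 / k₀ := Real.sq_sqrt (by positivity)
    nlinarith [Real.sqrt_nonneg (2 / k₀), sq_abs x]
  have hks : 1 ≤ k₀ * s := by
    rw [div_le_iff₀ hk₀0] at hx2k
    rw [hs_def]; nlinarith
  obtain ⟨m, hm_def⟩ : ∃ v : ℝ, v = 1 / s := ⟨_, rfl⟩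
  have hm0 : 0 < m := by rw [hm_def]; positivity
  have hmk : m ≤ k₀ := by
    rw [hm_def, div_le_iff₀ hs0]; linarith
  have hm1 : m < 1 := lt_of_le_of_lt hmk hk₀1
  -- integrability of the two integrands
  have hED : IntegrableOn (fun k : ℝ =>
      k ^ (a - 1/2) * (1 - k) ^ (-a - 1) * L ((1 / τ ^ 2) * (1 / k - 1)) *
        Real.exp (-k * x ^ 2 / 2)) (Ioo 0 1) volume := by
    apply hg.mono' ((hmD.mul (by fun_prop)).aestronglyMeasurable.restrict)
    rw [ae_restrict_iff' measurableSet_Ioo]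
    refine ae_of_all _ fun k hk => ?_
    have h1 : Real.exp (-k * x ^ 2 / 2) ≤ 1 := by
      apply Real.exp_le_one_iff.2
      nlinarith [hk.1.le, hx2pos.le]
    simp only [Real.norm_eq_abs, Pi.mul_apply]; rw [abs_of_nonneg (mul_nonneg (hgpos k hk).le (Real.exp_pos _).le)]
    calc k ^ (a - 1/2) * (1 - k) ^ (-a - 1) * L ((1 / τ ^ 2) * (1 / k - 1)) *
          Real.exp (-k * x ^ 2 / 2)
        ≤ k ^ (a - 1/2) * (1 - k) ^ (-a - 1) * L ((1 / τ ^ 2) * (1 / k - 1)) * 1 :=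
          mul_le_mul_of_nonneg_left h1 (hgpos k hk).le
      _ = k ^ (a - 1/2) * (1 - k) ^ (-a - 1) * L ((1 / τ ^ 2) * (1 / k - 1)) := by ring
  have hEN : IntegrableOn (fun k : ℝ =>
      k ^ (a + 1/2) * (1 - k) ^ (-a - 1) * L ((1 / τ ^ 2) * (1 / k - 1)) *
        Real.exp (-k * x ^ 2 / 2)) (Ioo 0 1) volume := by
    apply hED.mono' ((hmN.mul (by fun_prop)).aestronglyMeasurable.restrict)
    rw [ae_restrict_iff' measurableSet_Ioo]
    refine ae_of_all _ fun k hk => ?_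
    have hpow : k ^ (a + 1/2) ≤ k ^ (a - 1/2) :=
      Real.rpow_le_rpow_of_exponent_ge hk.1 hk.2.le (by linarith)
    simp only [Real.norm_eq_abs, Pi.mul_apply]; rw [abs_of_nonneg (mul_nonneg (hgNpos k hk).le (Real.exp_pos _).le)]
    have h1k : (0:ℝ) < 1 - k := by linarith [hk.2]
    show k ^ (a + 1/2) * (1 - k) ^ (-a - 1) * L ((1 / τ ^ 2) * (1 / k - 1)) *
          Real.exp (-k * x ^ 2 / 2)
        ≤ k ^ (a - 1/2) * (1 - k) ^ (-a - 1) * L ((1 / τ ^ 2) * (1 / k - 1)) *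
          Real.exp (-k * x ^ 2 / 2)
    apply mul_le_mul_of_nonneg_right _ (Real.exp_pos _).le
    apply mul_le_mul_of_nonneg_right _ (hLpos _ (hargpos k hk)).le
    exact mul_le_mul_of_nonneg_right hpow (Real.rpow_pos_of_pos h1k _).le
  -- nonnegativity of the numerator
  have hN0 : 0 ≤ ∫ k in Ioo (0:ℝ) 1,
      k ^ (a + 1/2) * (1 - k) ^ (-a - 1) * L ((1 / τ ^ 2) * (1 / k - 1)) *
        Real.exp (-k * x ^ 2 / 2) :=
    setIntegral_nonneg measurableSet_Ioo fun k hk =>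
      (mul_pos (hgNpos k hk) (Real.exp_pos _)).le
  -- lower bound of the denominator
  have harglow : ∀ k : ℝ, k ∈ Ioo (0:ℝ) m → t₀ ≤ (1 / τ ^ 2) * (1 / k - 1) := by
    intro k hk
    have hk0 : 0 < k := hk.1
    have hkk₀ : k ≤ k₀ := le_trans hk.2.le hmk
    have h1k : 1 + τ ^ 2 * t₀ ≤ 1 / k := by
      rw [le_div_iff₀ hk0]
      calc (1 + τ ^ 2 * t₀) * k ≤ (1 + τ ^ 2 * t₀) * k₀ := by nlinarith
        _ = 1 := by rw [hk₀_def]; field_simp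
    calc t₀ = (1 / τ ^ 2) * (τ ^ 2 * t₀) := by field_simp
      _ ≤ (1 / τ ^ 2) * (1 / k - 1) := by
          apply mul_le_mul_of_nonneg_left (by linarith) (by positivity)
  have hLB : (c₀ * Real.exp (-1)) * (m ^ (a + 1/2) / (a + 1/2)) ≤
      ∫ k in Ioo (0:ℝ) 1,
        k ^ (a - 1/2) * (1 - k) ^ (-a - 1) * L ((1 / τ ^ 2) * (1 / k - 1)) *
          Real.exp (-k * x ^ 2 / 2) := by
    have hsub : Ioo (0:ℝ) m ⊆ Ioo (0:ℝ) 1 := Ioo_subset_Ioo le_rfl hm1.le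
    have hint_rpow : IntegrableOn (fun k : ℝ => k ^ (a - 1/2)) (Ioo 0 m) := by
      have h := intervalIntegral.intervalIntegrable_rpow' (a := 0) (b := m)
        (by linarith : (-1:ℝ) < a - 1/2)
      rwa [intervalIntegrable_iff_integrableOn_Ioo_of_le hm0.le] at h
    have step1 : ∫ k in Ioo (0:ℝ) m, (c₀ * Real.exp (-1)) * k ^ (a - 1/2) ≤
        ∫ k in Ioo (0:ℝ) m,
          k ^ (a - 1/2) * (1 - k) ^ (-a - 1) * L ((1 / τ ^ 2) * (1 / k - 1)) *
            Real.exp (-k * x ^ 2 / 2) := by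
      apply setIntegral_mono_on (hint_rpow.const_mul _) (hED.mono_set hsub) measurableSet_Ioo
      intro k hk
      have hk01 : k ∈ Ioo (0:ℝ) 1 := hsub hk
      have h1k : (0:ℝ) < 1 - k := by linarith [hk01.2]
      have h1 : (1:ℝ) ≤ (1 - k) ^ (-a - 1) :=
        Real.one_le_rpow_of_pos_of_le_one_of_nonpos h1k (by linarith [hk01.1]) (by linarith)
      have h2 : c₀ ≤ L ((1 / τ ^ 2) * (1 / k - 1)) := hlow _ (harglow k hk)
      have h3 : Real.exp (-1) ≤ Real.exp (-k * x ^ 2 / 2) := by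
        apply Real.exp_le_exp.2
        have : k * s < 1 := by
          have := hk.2
          rw [hm_def] at this
          have h4 : k * s < (1/s) * s := by nlinarith
          rw [one_div, inv_mul_cancel₀ hs0.ne'] at h4
          exact h4
        rw [hs_def] at this; nlinarith
      have hkpow : (0:ℝ) ≤ k ^ (a - 1/2) := Real.rpow_nonneg hk.1.le _
      calc (c₀ * Real.exp (-1)) * k ^ (a - 1/2)
          = k ^ (a - 1/2) * 1 * c₀ * Real.exp (-1) := by ring
        _ ≤ k ^ (a - 1/2) * (1 - k) ^ (-a - 1) * L ((1 / τ ^ 2) * (1 / k - 1)) *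
            Real.exp (-k * x ^ 2 / 2) := by
            apply mul_le_mul
            apply mul_le_mul
            apply mul_le_mul_of_nonneg_left h1 hkpow
            exact h2
            exact hc₀.le
            · exact mul_nonneg hkpow (by linarith)
            · exact h3
            · positivity
            · exact mul_nonneg (mul_nonneg hkpow (by linarith)) (by linarith [hLpos _ (hargpos k hk01)])
    have step2 : ∫ k in Ioo (0:ℝ) m, (c₀ * Real.exp (-1)) * k ^ (a - 1/2) =
        (c₀ * Real.exp (-1)) * (m ^ (a + 1/2) / (a + 1/2)) := by
      rw [MeasureTheory.integral_const_mul]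
      congr 1
      rw [← integral_Ioc_eq_integral_Ioo, ← intervalIntegral.integral_of_le hm0.le,
        integral_rpow (Or.inl (by linarith : (-1:ℝ) < a - 1/2)),
        Real.zero_rpow (by linarith : a - 1/2 + 1 ≠ 0)]
      rw [show a - 1/2 + 1 = a + 1/2 by ring]
      ring
    have step3 : ∫ k in Ioo (0:ℝ) m,
          k ^ (a - 1/2) * (1 - k) ^ (-a - 1) * L ((1 / τ ^ 2) * (1 / k - 1)) *
            Real.exp (-k * x ^ 2 / 2) ≤
        ∫ k in Ioo (0:ℝ) 1,
          k ^ (a - 1/2) * (1 - k) ^ (-a - 1) * L ((1 / τ ^ 2) * (1 / k - 1)) *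
            Real.exp (-k * x ^ 2 / 2) := by
      apply setIntegral_mono_set hED
      · filter_upwards [ae_restrict_mem measurableSet_Ioo] with k hk
        exact (mul_pos (hgpos k hk) (Real.exp_pos _)).le
      · exact (HasSubset.Subset.eventuallyLE hsub)
    linarith [step1, step3, step2 ▸ step1]
  have hLb0 : 0 < (c₀ * Real.exp (-1)) * (m ^ (a + 1/2) / (a + 1/2)) := by
    have := Real.rpow_pos_of_pos hm0 (a + 1/2)
    have he := Real.exp_pos (-1)
    apply mul_pos (mul_pos hc₀ he)
    positivity
  have hD0 : 0 < ∫ k in Ioo (0:ℝ) 1,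
      k ^ (a - 1/2) * (1 - k) ^ (-a - 1) * L ((1 / τ ^ 2) * (1 / k - 1)) *
        Real.exp (-k * x ^ 2 / 2) := lt_of_lt_of_le hLb0 hLB
  -- upper bound of the numerator: split the integral
  have hsplit : (∫ k in Ioo (0:ℝ) 1,
      k ^ (a + 1/2) * (1 - k) ^ (-a - 1) * L ((1 / τ ^ 2) * (1 / k - 1)) *
        Real.exp (-k * x ^ 2 / 2)) =
      (∫ k in Ioo (0:ℝ) k₀,
        k ^ (a + 1/2) * (1 - k) ^ (-a - 1) * L ((1 / τ ^ 2) * (1 / k - 1)) *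
          Real.exp (-k * x ^ 2 / 2)) +
      (∫ k in Ico k₀ 1,
        k ^ (a + 1/2) * (1 - k) ^ (-a - 1) * L ((1 / τ ^ 2) * (1 / k - 1)) *
          Real.exp (-k * x ^ 2 / 2)) := by
    rw [← Set.Ioo_union_Ico_eq_Ioo hk₀0 hk₀1.le]
    apply setIntegral_union
    · exact Set.disjoint_left.mpr fun k hk hk' => absurd hk.2 (not_lt.mpr hk'.1)
    · exact measurableSet_Ico
    · exact hEN.mono_set (by rw [← Set.Ioo_union_Ico_eq_Ioo hk₀0 hk₀1.le]; exact subset_union_left)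
    · exact hEN.mono_set (by rw [← Set.Ioo_union_Ico_eq_Ioo hk₀0 hk₀1.le]; exact subset_union_right)
  -- tail bound
  have hsubT : Ico k₀ (1:ℝ) ⊆ Ioo (0:ℝ) 1 := fun k hk => ⟨lt_of_lt_of_le hk₀0 hk.1, hk.2⟩
  have htail : (∫ k in Ico k₀ 1,
      k ^ (a + 1/2) * (1 - k) ^ (-a - 1) * L ((1 / τ ^ 2) * (1 / k - 1)) *
        Real.exp (-k * x ^ 2 / 2)) ≤ G * Real.exp (-(k₀/2) * x ^ 2) := by
    have h1 : (∫ k in Ico k₀ 1,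
        k ^ (a + 1/2) * (1 - k) ^ (-a - 1) * L ((1 / τ ^ 2) * (1 / k - 1)) *
          Real.exp (-k * x ^ 2 / 2)) ≤
        ∫ k in Ico k₀ 1,
          (k ^ (a - 1/2) * (1 - k) ^ (-a - 1) * L ((1 / τ ^ 2) * (1 / k - 1))) *
            Real.exp (-(k₀/2) * x ^ 2) := by
      apply setIntegral_mono_on (hEN.mono_set hsubT)
        ((hg.mono_set hsubT).mul_const _) measurableSet_Ico
      intro k hk
      have hk01 : k ∈ Ioo (0:ℝ) 1 := hsubT hk
      have h1k : (0:ℝ) < 1 - k := by linarith [hk01.2]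
      have hpow : k ^ (a + 1/2) ≤ k ^ (a - 1/2) :=
        Real.rpow_le_rpow_of_exponent_ge hk01.1 hk01.2.le (by linarith)
      have hgle : k ^ (a + 1/2) * (1 - k) ^ (-a - 1) * L ((1 / τ ^ 2) * (1 / k - 1)) ≤
          k ^ (a - 1/2) * (1 - k) ^ (-a - 1) * L ((1 / τ ^ 2) * (1 / k - 1)) :=
        mul_le_mul_of_nonneg_right (mul_le_mul_of_nonneg_right hpow
          (Real.rpow_pos_of_pos h1k _).le) (hLpos _ (hargpos k hk01)).le
      have hexp : Real.exp (-k * x ^ 2 / 2) ≤ Real.exp (-(k₀/2) * x ^ 2) := by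
        apply Real.exp_le_exp.2
        nlinarith [hk.1, hx2pos.le]
      exact mul_le_mul hgle hexp (Real.exp_pos _).le (hgpos k hk01).le
    rw [integral_mul_const] at h1
    apply le_trans h1
    apply mul_le_mul_of_nonneg_right _ (Real.exp_pos _).le
    rw [hG_def]
    apply setIntegral_mono_set hg
    · filter_upwards [ae_restrict_mem measurableSet_Ioo] with k hk
      exact (hgpos k hk).le
    · exact HasSubset.Subset.eventuallyLE hsubT
  -- small-k bound
  have hIGamma : IntegrableOn (fun k : ℝ => k ^ (a - 1/2) * Real.exp (-(s/2 * k))) (Ioi 0) := by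
    have h := integrableOn_rpow_mul_exp_neg_mul_rpow
      (by linarith : (-1:ℝ) < a - 1/2) (one_pos : (0:ℝ) < 1) (by positivity : (0:ℝ) < s/2)
    apply h.congr_fun _ measurableSet_Ioi
    intro k hk
    simp only [Real.rpow_one]
    ring_nf
  have hsmall : (∫ k in Ioo (0:ℝ) k₀,
      k ^ (a + 1/2) * (1 - k) ^ (-a - 1) * L ((1 / τ ^ 2) * (1 / k - 1)) *
        Real.exp (-k * x ^ 2 / 2)) ≤
      (2 * Real.exp (-1) * ((1 - k₀) ^ (-a - 1)) * M / s) *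
        ((2/s) ^ (a + 1/2) * Real.Gamma (a + 1/2)) := by
    have hsubS : Ioo (0:ℝ) k₀ ⊆ Ioo (0:ℝ) 1 := Ioo_subset_Ioo le_rfl hk₀1.le
    have h1 : (∫ k in Ioo (0:ℝ) k₀,
        k ^ (a + 1/2) * (1 - k) ^ (-a - 1) * L ((1 / τ ^ 2) * (1 / k - 1)) *
          Real.exp (-k * x ^ 2 / 2)) ≤
        ∫ k in Ioo (0:ℝ) k₀,
          (2 * Real.exp (-1) * ((1 - k₀) ^ (-a - 1)) * M / s) *
            (k ^ (a - 1/2) * Real.exp (-(s/2 * k))) := by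
      apply setIntegral_mono_on (hEN.mono_set hsubS)
        (((hIGamma.mono_set (Ioo_subset_Ioi_self)).const_mul _)) measurableSet_Ioo
      intro k hk
      have hk0 : 0 < k := hk.1
      have hk01 : k ∈ Ioo (0:ℝ) 1 := hsubS hk
      have h1k : (0:ℝ) < 1 - k := by linarith [hk01.2]
      have hLk := hLpos _ (hargpos k hk01)
      have hksplit : Real.exp (-k * x ^ 2 / 2) = Real.exp (-(s/2 * k)) * Real.exp (-(s/2 * k)) := by
        rw [← Real.exp_add]
        congr 1
        rw [hs_def]; ring
      have hkpow : k ^ (a + 1/2) = k ^ (a - 1/2) * k := by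
        rw [show a + 1/2 = (a - 1/2) + 1 by ring, Real.rpow_add_one hk0.ne']
      have hke : k * Real.exp (-(s/2 * k)) ≤ 2 * Real.exp (-1) / s := by
        have ht0 : (0:ℝ) ≤ s/2 * k := by positivity
        have h1' : s/2 * k ≤ Real.exp (s/2 * k - 1) := by
          have := Real.add_one_le_exp (s/2 * k - 1); linarith
        have h2' : (s/2 * k) * Real.exp (-(s/2 * k)) ≤
            Real.exp (s/2 * k - 1) * Real.exp (-(s/2 * k)) :=
          mul_le_mul_of_nonneg_right h1' (Real.exp_pos _).le
        rw [← Real.exp_add, show s/2 * k - 1 + -(s/2 * k) = -1 by ring] at h2'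
        have h3' : k * Real.exp (-(s/2 * k)) = (2/s) * ((s/2 * k) * Real.exp (-(s/2 * k))) := by
          field_simp
        rw [h3']
        calc (2/s) * ((s/2 * k) * Real.exp (-(s/2 * k))) ≤ (2/s) * Real.exp (-1) := by
              apply mul_le_mul_of_nonneg_left h2' (by positivity)
          _ = 2 * Real.exp (-1) / s := by ring
      have hCk : (1 - k) ^ (-a - 1) ≤ (1 - k₀) ^ (-a - 1) :=
        Real.rpow_le_rpow_of_nonpos (by linarith) (by linarith [hk.2]) (by linarith)
      have hMk : L ((1 / τ ^ 2) * (1 / k - 1)) ≤ M := hM _ (hargpos k hk01)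
      have hkenn : (0:ℝ) ≤ k * Real.exp (-(s/2 * k)) := by positivity
      calc k ^ (a + 1/2) * (1 - k) ^ (-a - 1) * L ((1 / τ ^ 2) * (1 / k - 1)) *
            Real.exp (-k * x ^ 2 / 2)
          = (k ^ (a - 1/2) * Real.exp (-(s/2 * k))) *
              ((1 - k) ^ (-a - 1) * L ((1 / τ ^ 2) * (1 / k - 1)) *
                (k * Real.exp (-(s/2 * k)))) := by
            rw [hkpow, hksplit]; ring
        _ ≤ (k ^ (a - 1/2) * Real.exp (-(s/2 * k))) *
              (((1 - k₀) ^ (-a - 1)) * M * (2 * Real.exp (-1) / s)) := by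
            apply mul_le_mul_of_nonneg_left _
              (mul_nonneg (Real.rpow_nonneg hk0.le _) (Real.exp_pos _).le)
            apply mul_le_mul _ hke hkenn (mul_nonneg hC0.le hM0.le)
            exact mul_le_mul hCk hMk hLk.le hC0.le
        _ = (2 * Real.exp (-1) * ((1 - k₀) ^ (-a - 1)) * M / s) *
              (k ^ (a - 1/2) * Real.exp (-(s/2 * k))) := by ring
    rw [MeasureTheory.integral_const_mul] at h1
    apply le_trans h1
    have h2 : (∫ k in Ioo (0:ℝ) k₀, k ^ (a - 1/2) * Real.exp (-(s/2 * k))) ≤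
        ∫ k in Ioi (0:ℝ), k ^ (a - 1/2) * Real.exp (-(s/2 * k)) := by
      apply setIntegral_mono_set hIGamma
      · filter_upwards [ae_restrict_mem measurableSet_Ioi] with k hk
        have : (0:ℝ) < k := hk
        positivity
      · exact HasSubset.Subset.eventuallyLE Ioo_subset_Ioi_self
    have h3 : (∫ k in Ioi (0:ℝ), k ^ (a - 1/2) * Real.exp (-(s/2 * k))) =
        (2/s) ^ (a + 1/2) * Real.Gamma (a + 1/2) := by
      have h := Real.integral_rpow_mul_exp_neg_mul_Ioi
        (by linarith : (0:ℝ) < a + 1/2) (by positivity : (0:ℝ) < s/2)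
      rw [show a + 1/2 - 1 = a - 1/2 by ring] at h
      rw [show (1:ℝ) / (s/2) = 2/s by field_simp] at h
      exact h
    have hc : (0:ℝ) ≤ 2 * Real.exp (-1) * ((1 - k₀) ^ (-a - 1)) * M / s := by positivity
    calc (2 * Real.exp (-1) * ((1 - k₀) ^ (-a - 1)) * M / s) *
          (∫ k in Ioo (0:ℝ) k₀, k ^ (a - 1/2) * Real.exp (-(s/2 * k)))
        ≤ (2 * Real.exp (-1) * ((1 - k₀) ^ (-a - 1)) * M / s) *
          (∫ k in Ioi (0:ℝ), k ^ (a - 1/2) * Real.exp (-(s/2 * k))) :=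
          mul_le_mul_of_nonneg_left h2 hc
      _ = (2 * Real.exp (-1) * ((1 - k₀) ^ (-a - 1)) * M / s) *
          ((2/s) ^ (a + 1/2) * Real.Gamma (a + 1/2)) := by rw [h3]
  -- total upper bound on numerator
  have hNU : (∫ k in Ioo (0:ℝ) 1,
      k ^ (a + 1/2) * (1 - k) ^ (-a - 1) * L ((1 / τ ^ 2) * (1 / k - 1)) *
        Real.exp (-k * x ^ 2 / 2)) ≤
      (2 * Real.exp (-1) * ((1 - k₀) ^ (-a - 1)) * M / s) *
        ((2/s) ^ (a + 1/2) * Real.Gamma (a + 1/2)) + G * Real.exp (-(k₀/2) * x ^ 2) := by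
    rw [hsplit]; exact add_le_add hsmall htail
  have hU0 : (0:ℝ) ≤ (2 * Real.exp (-1) * ((1 - k₀) ^ (-a - 1)) * M / s) *
      ((2/s) ^ (a + 1/2) * Real.Gamma (a + 1/2)) + G * Real.exp (-(k₀/2) * x ^ 2) := by
    apply add_nonneg
    · positivity
    · exact mul_nonneg hG0 (Real.exp_pos _).le
  -- rpow algebra facts
  have hS2 : (2/s) ^ (a + 1/2) = 2 ^ (a + 1/2) * m ^ (a + 1/2) := by
    rw [hm_def, show (2:ℝ)/s = 2 * (1/s) by ring,
      Real.mul_rpow (by norm_num) (by positivity)]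
  have hmp : m ^ (a + 1/2) * s ^ (a + 1/2) = 1 := by
    rw [hm_def, ← Real.mul_rpow (by positivity) hs0.le, one_div, inv_mul_cancel₀ hs0.ne',
      Real.one_rpow]
  have hxx : (x ^ 2) ^ (a + 1/2 + 1) = (2*s) ^ (a + 1/2) * (2*s) := by
    rw [show x ^ 2 = 2*s by rw [hs_def]; ring, Real.rpow_add_one (by positivity : (2*s) ≠ 0)]
  have h2sp : s ^ (a + 1/2) ≤ (2*s) ^ (a + 1/2) :=
    Real.rpow_le_rpow hs0.le (by linarith) (by linarith)
  -- final assembly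
  have key : |x| * ((∫ k in Ioo (0:ℝ) 1,
      k ^ (a + 1/2) * (1 - k) ^ (-a - 1) * L ((1 / τ ^ 2) * (1 / k - 1)) *
        Real.exp (-k * x ^ 2 / 2)) /
      (∫ k in Ioo (0:ℝ) 1,
      k ^ (a - 1/2) * (1 - k) ^ (-a - 1) * L ((1 / τ ^ 2) * (1 / k - 1)) *
        Real.exp (-k * x ^ 2 / 2))) ≤
      K1 / |x| + K2 * (x ^ 2) ^ (a + 1/2 + 1) * Real.exp (-(k₀/2) * x ^ 2) := by
    have hdiv : (∫ k in Ioo (0:ℝ) 1,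
        k ^ (a + 1/2) * (1 - k) ^ (-a - 1) * L ((1 / τ ^ 2) * (1 / k - 1)) *
          Real.exp (-k * x ^ 2 / 2)) /
        (∫ k in Ioo (0:ℝ) 1,
        k ^ (a - 1/2) * (1 - k) ^ (-a - 1) * L ((1 / τ ^ 2) * (1 / k - 1)) *
          Real.exp (-k * x ^ 2 / 2)) ≤
        ((2 * Real.exp (-1) * ((1 - k₀) ^ (-a - 1)) * M / s) *
          ((2/s) ^ (a + 1/2) * Real.Gamma (a + 1/2)) + G * Real.exp (-(k₀/2) * x ^ 2)) /
        ((c₀ * Real.exp (-1)) * (m ^ (a + 1/2) / (a + 1/2))) :=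
      div_le_div₀ hU0 hNU hLb0 hLB
    have hyU : |x| * ((2 * Real.exp (-1) * ((1 - k₀) ^ (-a - 1)) * M / s) *
          ((2/s) ^ (a + 1/2) * Real.Gamma (a + 1/2)) + G * Real.exp (-(k₀/2) * x ^ 2)) ≤
        (K1 / |x| + K2 * (x ^ 2) ^ (a + 1/2 + 1) * Real.exp (-(k₀/2) * x ^ 2)) *
          ((c₀ * Real.exp (-1)) * (m ^ (a + 1/2) / (a + 1/2))) := by
      have ineq1 : |x| * ((2 * Real.exp (-1) * ((1 - k₀) ^ (-a - 1)) * M / s) *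
            ((2/s) ^ (a + 1/2) * Real.Gamma (a + 1/2))) ≤
          (K1 / |x|) * ((c₀ * Real.exp (-1)) * (m ^ (a + 1/2) / (a + 1/2))) := by
        apply le_of_eq
        rw [hS2, hK1_def, hs_y]
        have hy2ne : |x| ^ 2 ≠ 0 := by positivity
        field_simp
        norm_num
      have ineq2 : |x| * (G * Real.exp (-(k₀/2) * x ^ 2)) ≤
          (K2 * (x ^ 2) ^ (a + 1/2 + 1) * Real.exp (-(k₀/2) * x ^ 2)) *
            ((c₀ * Real.exp (-1)) * (m ^ (a + 1/2) / (a + 1/2))) := by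
        have hE := Real.exp_pos (-(k₀/2) * x ^ 2)
        have hy2s : |x| ≤ 2 * s := by
          rw [hs_y]
          have := le_self_pow₀ hy1 two_ne_zero
          linarith
        have h1Q : 1 ≤ (2*s) ^ (a + 1/2) * m ^ (a + 1/2) := by
          calc (1:ℝ) = s ^ (a + 1/2) * m ^ (a + 1/2) := by rw [mul_comm] at hmp; rw [hmp]
            _ ≤ (2*s) ^ (a + 1/2) * m ^ (a + 1/2) :=
              mul_le_mul_of_nonneg_right h2sp (Real.rpow_nonneg hm0.le _)
        have hRHS : (K2 * (x ^ 2) ^ (a + 1/2 + 1) * Real.exp (-(k₀/2) * x ^ 2)) *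
            ((c₀ * Real.exp (-1)) * (m ^ (a + 1/2) / (a + 1/2))) =
            G * ((2*s) ^ (a + 1/2) * m ^ (a + 1/2)) * (2*s) * Real.exp (-(k₀/2) * x ^ 2) := by
          rw [hK2_def, hxx]
          have he1 : Real.exp (-1) ≠ 0 := (Real.exp_pos _).ne'
          field_simp
        rw [hRHS]
        calc |x| * (G * Real.exp (-(k₀/2) * x ^ 2))
            ≤ (2*s) * (G * Real.exp (-(k₀/2) * x ^ 2)) :=
            mul_le_mul_of_nonneg_right hy2s (mul_nonneg hG0 hE.le)
          _ = G * 1 * (2*s) * Real.exp (-(k₀/2) * x ^ 2) := by ring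
          _ ≤ G * ((2*s) ^ (a + 1/2) * m ^ (a + 1/2)) * (2*s) * Real.exp (-(k₀/2) * x ^ 2) := by
              apply mul_le_mul_of_nonneg_right _ hE.le
              apply mul_le_mul_of_nonneg_right _ (by linarith)
              exact mul_le_mul_of_nonneg_left h1Q hG0
      calc |x| * ((2 * Real.exp (-1) * ((1 - k₀) ^ (-a - 1)) * M / s) *
            ((2/s) ^ (a + 1/2) * Real.Gamma (a + 1/2)) + G * Real.exp (-(k₀/2) * x ^ 2))
          = |x| * ((2 * Real.exp (-1) * ((1 - k₀) ^ (-a - 1)) * M / s) *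
            ((2/s) ^ (a + 1/2) * Real.Gamma (a + 1/2))) +
            |x| * (G * Real.exp (-(k₀/2) * x ^ 2)) := by ring
        _ ≤ (K1 / |x|) * ((c₀ * Real.exp (-1)) * (m ^ (a + 1/2) / (a + 1/2))) +
            (K2 * (x ^ 2) ^ (a + 1/2 + 1) * Real.exp (-(k₀/2) * x ^ 2)) *
              ((c₀ * Real.exp (-1)) * (m ^ (a + 1/2) / (a + 1/2))) := add_le_add ineq1 ineq2
        _ = (K1 / |x| + K2 * (x ^ 2) ^ (a + 1/2 + 1) * Real.exp (-(k₀/2) * x ^ 2)) *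
            ((c₀ * Real.exp (-1)) * (m ^ (a + 1/2) / (a + 1/2))) := by ring
    calc |x| * ((∫ k in Ioo (0:ℝ) 1,
          k ^ (a + 1/2) * (1 - k) ^ (-a - 1) * L ((1 / τ ^ 2) * (1 / k - 1)) *
            Real.exp (-k * x ^ 2 / 2)) /
          (∫ k in Ioo (0:ℝ) 1,
          k ^ (a - 1/2) * (1 - k) ^ (-a - 1) * L ((1 / τ ^ 2) * (1 / k - 1)) *
            Real.exp (-k * x ^ 2 / 2)))
        ≤ |x| * (((2 * Real.exp (-1) * ((1 - k₀) ^ (-a - 1)) * M / s) *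
            ((2/s) ^ (a + 1/2) * Real.Gamma (a + 1/2)) + G * Real.exp (-(k₀/2) * x ^ 2)) /
          ((c₀ * Real.exp (-1)) * (m ^ (a + 1/2) / (a + 1/2)))) :=
          mul_le_mul_of_nonneg_left hdiv (abs_nonneg x)
      _ = (|x| * ((2 * Real.exp (-1) * ((1 - k₀) ^ (-a - 1)) * M / s) *
            ((2/s) ^ (a + 1/2) * Real.Gamma (a + 1/2)) + G * Real.exp (-(k₀/2) * x ^ 2))) /
          ((c₀ * Real.exp (-1)) * (m ^ (a + 1/2) / (a + 1/2))) := by ring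
      _ ≤ K1 / |x| + K2 * (x ^ 2) ^ (a + 1/2 + 1) * Real.exp (-(k₀/2) * x ^ 2) :=
          (div_le_iff₀ hLb0).2 hyU
  rw [abs_mul, abs_of_nonneg (div_nonneg hN0 hD0.le)]
  exact key
end
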